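/- Fix an integer σ ≥ 2. Then there exists a constant C > 0 such that for all integers n ≥ 2, | log₂( n · 2^(2n) · S₂(σn, n) ) − (σ − 1) · n · log₂ n | ≤ C · n. In other words, the information-theoretic lower bound log₂(n · 2^(2n) · S₂(σn, n)) for representing an initially connected DFA with n states over a σ-letter alphabet equals (σ−1)·n·log₂ n + O(n). -/

import Mathlib

/-- The Stirling numbers of the second kind. -/
def stirlingSecond : ℕ → ℕ → ℕ
  | 0, 0 => 1
  | 0, _ + 1 => 0
  | _ + 1, 0 => 0
  | n + 1, m + 1 => (m + 1) * stirlingSecond n (m + 1) + stirlingSecond n m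

lemma choose_le_two_pow' (N m : ℕ) : N.choose m ≤ 2 ^ N := by
  rcases le_or_gt m N with h | h
  · calc N.choose m ≤ ∑ i ∈ Finset.range (N + 1), N.choose i :=
          Finset.single_le_sum (fun i _ => Nat.zero_le _) (Finset.mem_range.mpr (Nat.lt_succ_of_le h))
    _ = 2 ^ N := Nat.sum_range_choose N
  · simp [Nat.choose_eq_zero_of_lt h]

lemma stirling_le : ∀ N m : ℕ, stirlingSecond N m ≤ N.choose m * m ^ (N - m) := by
  intro N
  induction N with
  | zero =>
    intro m
    match m with
    | 0 => simp [stirlingSecond]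
    | m + 1 => simp [stirlingSecond]
  | succ N ih =>
    intro m
    match m with
    | 0 => simp [stirlingSecond]
    | m + 1 =>
      show (m + 1) * stirlingSecond N (m + 1) + stirlingSecond N m ≤ _
      rcases le_or_gt N m with h | h
      · have h1 : N.choose (m + 1) = 0 := Nat.choose_eq_zero_of_lt (Nat.lt_succ_of_le h)
        have h2 : stirlingSecond N (m + 1) = 0 := by
          have := ih (m + 1)
          rw [h1] at this; simpa using this
        have h3 : stirlingSecond N m ≤ N.choose m * m ^ (N - m) := ih m
        have h4 : (m : ℕ) ^ (N - m) ≤ (m + 1) ^ (N - m) :=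
          Nat.pow_le_pow_left (Nat.le_succ m) _
        calc (m + 1) * stirlingSecond N (m + 1) + stirlingSecond N m
            = stirlingSecond N m := by rw [h2]; ring
          _ ≤ N.choose m * (m + 1) ^ (N - m) :=
              h3.trans (Nat.mul_le_mul_left _ h4)
          _ ≤ (N + 1).choose (m + 1) * (m + 1) ^ (N + 1 - (m + 1)) := by
              rw [Nat.succ_sub_succ]
              exact Nat.mul_le_mul_right _ (by rw [Nat.choose_succ_succ]; omega)
      · -- m + 1 ≤ N
        have e1 : N - m = (N - (m + 1)) + 1 := by omega
        have h1 := ih (m + 1)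
        have h3 : stirlingSecond N m ≤ N.choose m * (m + 1) ^ (N - m) :=
          (ih m).trans (Nat.mul_le_mul_left _ (Nat.pow_le_pow_left (Nat.le_succ m) _))
        calc (m + 1) * stirlingSecond N (m + 1) + stirlingSecond N m
            ≤ (m + 1) * (N.choose (m + 1) * (m + 1) ^ (N - (m + 1)))
              + N.choose m * (m + 1) ^ (N - m) :=
              Nat.add_le_add (Nat.mul_le_mul_left _ h1) h3
          _ = (N.choose (m + 1) + N.choose m) * (m + 1) ^ (N - m) := by
              rw [e1]; ring
          _ = (N + 1).choose (m + 1) * (m + 1) ^ (N + 1 - (m + 1)) := by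
              rw [Nat.succ_sub_succ, Nat.choose_succ_succ', Nat.add_comm]

lemma stirling_ge : ∀ d m : ℕ, m ^ d ≤ stirlingSecond (m + d) m := by
  intro d
  induction d with
  | zero =>
    intro m
    induction m with
    | zero => simp [stirlingSecond]
    | succ k ihm =>
      show 1 ≤ stirlingSecond (k + 1) (k + 1)
      show 1 ≤ (k + 1) * stirlingSecond k (k + 1) + stirlingSecond k k
      have : 1 ≤ stirlingSecond k k := by simpa using ihm
      omega
  | succ d ih =>
    intro m
    match m with
    | 0 => simp
    | k + 1 =>
      have : (k + 1 + (d + 1)) = (k + 1 + d) + 1 := by omega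
      rw [this]
      show (k + 1) ^ (d + 1) ≤
        (k + 1) * stirlingSecond (k + 1 + d) (k + 1) + stirlingSecond (k + 1 + d) k
      have h1 := ih (k + 1)
      calc (k + 1) ^ (d + 1) = (k + 1) * (k + 1) ^ d := by ring
        _ ≤ (k + 1) * stirlingSecond (k + 1 + d) (k + 1) := Nat.mul_le_mul_left _ h1
        _ ≤ _ := Nat.le_add_right _ _

theorem dfa_lower_bound_asymptotics (σ : ℕ) (hσ : 2 ≤ σ) :
    ∃ C : ℝ, 0 < C ∧ ∀ n : ℕ, 2 ≤ n →
      |Real.logb 2 ((n : ℝ) * 2 ^ (2 * n) * (stirlingSecond (σ * n) n : ℝ)) -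
        ((σ : ℝ) - 1) * (n : ℝ) * Real.logb 2 (n : ℝ)| ≤ C * (n : ℝ) := by
  refine ⟨(σ : ℝ) + 3, by positivity, fun n hn => ?_⟩
  have hn1 : (1 : ℝ) < (n : ℝ) := by exact_mod_cast hn.trans_lt' one_lt_two
  have hn0 : (0 : ℝ) < (n : ℝ) := by linarith
  set S : ℕ := stirlingSecond (σ * n) n with hSdef
  -- nat bounds
  have hsub : σ * n - n = (σ - 1) * n := by
    have := Nat.sub_mul σ 1 n; omega
  have hlow : n ^ ((σ - 1) * n) ≤ S := by
    have := stirling_ge ((σ - 1) * n) n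
    have he : n + (σ - 1) * n = σ * n := by
      have h1 : 1 + (σ - 1) = σ := by omega
      calc n + (σ - 1) * n = (1 + (σ - 1)) * n := by ring
        _ = σ * n := by rw [h1]
    rwa [he] at this
  have hup : S ≤ 2 ^ (σ * n) * n ^ ((σ - 1) * n) := by
    have h1 := stirling_le (σ * n) n
    have h2 := choose_le_two_pow' (σ * n) n
    rw [hsub] at h1
    exact h1.trans (Nat.mul_le_mul_right _ h2)
  have hS1 : 1 ≤ S := le_trans (Nat.one_le_pow _ _ (by omega)) hlow
  have hSR : (1 : ℝ) ≤ (S : ℝ) := by exact_mod_cast hS1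
  have hSpos : (0 : ℝ) < (S : ℝ) := by linarith
  -- decompose logb of product
  have hlogsplit : Real.logb 2 ((n : ℝ) * 2 ^ (2 * n) * (S : ℝ)) =
      Real.logb 2 (n : ℝ) + (2 * n : ℕ) + Real.logb 2 (S : ℝ) := by
    rw [Real.logb_mul (by positivity) (by positivity),
        Real.logb_mul (by positivity) (by positivity),
        Real.logb_pow, Real.logb_self_eq_one (b := 2) (by norm_num)]
    ring
  -- bounds on logb S
  have hcast : (((σ - 1) * n : ℕ) : ℝ) = ((σ : ℝ) - 1) * n := by
    have : 1 ≤ σ := by omega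
    push_cast [Nat.cast_sub this]
    ring
  have hlogS_low : ((σ : ℝ) - 1) * n * Real.logb 2 (n : ℝ) ≤ Real.logb 2 (S : ℝ) := by
    have h := Real.logb_le_logb_of_le (b := 2) (by norm_num)
      (x := ((n : ℝ) ^ ((σ - 1) * n))) (y := (S : ℝ)) (by positivity) (by exact_mod_cast hlow)
    rwa [Real.logb_pow, hcast] at h
  have hlogS_up : Real.logb 2 (S : ℝ) ≤ (σ * n : ℕ) + ((σ : ℝ) - 1) * n * Real.logb 2 (n : ℝ) := by
    have h := Real.logb_le_logb_of_le (b := 2) (by norm_num)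
      (x := (S : ℝ)) hSpos (y := (2 : ℝ) ^ (σ * n) * (n : ℝ) ^ ((σ - 1) * n)) (by exact_mod_cast hup)
    rw [Real.logb_mul (by positivity) (by positivity), Real.logb_pow, Real.logb_pow,
        Real.logb_self_eq_one (b := 2) (by norm_num), hcast] at h
    calc Real.logb 2 (S : ℝ) ≤ _ := h
      _ = (σ * n : ℕ) + ((σ : ℝ) - 1) * n * Real.logb 2 (n : ℝ) := by push_cast; ring
  -- logb n bounds
  have hlogn_pos : 0 < Real.logb 2 (n : ℝ) := Real.logb_pos (by norm_num) hn1
  have hlogn_le : Real.logb 2 (n : ℝ) ≤ (n : ℝ) := by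
    have h2 : (n : ℝ) ≤ (2 : ℝ) ^ n := by
      exact_mod_cast (Nat.lt_two_pow_self (n := n)).le
    have := Real.logb_le_logb_of_le (b := 2) (by norm_num) hn0 h2
    rwa [Real.logb_pow, Real.logb_self_eq_one (b := 2) (by norm_num),
      mul_one] at this
  rw [hlogsplit]
  rw [abs_le]
  have hσn : ((σ * n : ℕ) : ℝ) = (σ : ℝ) * n := by push_cast; ring
  have h2n : ((2 * n : ℕ) : ℝ) = 2 * (n : ℝ) := by push_cast; ring
  rw [hσn] at hlogS_up
  rw [h2n]
  constructor <;> nlinarith [hlogn_pos, hlogn_le, hlogS_low, hlogS_up, hn0]
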